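/- For nonnegative integers with $j_0\le j_1$, $0\le i$, set $y_a=(l-i-j_a)/3$ (assumed integral and nonnegative) and $\bar b^{l,i}_{j_0,j_1}=(0,\,y_1,\,-2y_1+3y_0+i,\,y_0+i,\,y_0+j_0,\,0)\in B_l$. Then $\bar b^{l,i}_{j_0,j_1}$ is a highest weight element for the indices $0$ and $1$: $\tilde e_0\,\bar b^{l,i}_{j_0,j_1}=0$ and $\tilde e_1\,\bar b^{l,i}_{j_0,j_1}=0$ in $B_l$, and moreover $\varphi_0(\bar b^{l,i}_{j_0,j_1})=j_0$ and $\varphi_1(\bar b^{l,i}_{j_0,j_1})=j_1$. -/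
import Mathlib


/-- An element `(x₁,x₂,x₃,x̄₃,x̄₂,x̄₁)` (fields `x1 x2 x3 y3 y2 y1`). -/
structure C6 where
  x1 : ℤ
  x2 : ℤ
  x3 : ℤ
  y3 : ℤ
  y2 : ℤ
  y1 : ℤ
deriving DecidableEq

attribute [local instance] Classical.propDecidable

noncomputable section

/-- Membership in `B_{≥0}`: all coordinates nonnegative and `x₃ ≡ x̄₃ (mod 2)`. -/
def memB (b : C6) : Prop :=
  0 ≤ b.x1 ∧ 0 ≤ b.x2 ∧ 0 ≤ b.x3 ∧ 0 ≤ b.y3 ∧ 0 ≤ b.y2 ∧ 0 ≤ b.y1 ∧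
    b.x3 % 2 = b.y3 % 2

/-- Return `some b` if all coordinates are nonnegative, else `none` (i.e. `0`). -/
def chk (b : C6) : Option C6 :=
  if 0 ≤ b.x1 ∧ 0 ≤ b.x2 ∧ 0 ≤ b.x3 ∧ 0 ≤ b.y3 ∧ 0 ≤ b.y2 ∧ 0 ≤ b.y1 then some b
  else none

/-- The `G₂` one-row tableau operator `ẽ₁`. -/
def e1op (b : C6) : Option C6 :=
  if max (b.x2 - b.x3) 0 ≤ b.y2 - b.y3 then
    chk ⟨b.x1, b.x2, b.x3, b.y3, b.y2 + 1, b.y1 - 1⟩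
  else if b.y2 - b.y3 < 0 ∧ 0 ≤ b.x3 - b.x2 then
    chk ⟨b.x1, b.x2, b.x3 + 1, b.y3 - 1, b.y2, b.y1⟩
  else if max (b.y2 - b.y3) 0 < b.x2 - b.x3 then
    chk ⟨b.x1 + 1, b.x2 - 1, b.x3, b.y3, b.y2, b.y1⟩
  else none

/-- The `G₂` one-row tableau operator `f̃₁`. -/
def f1op (b : C6) : Option C6 :=
  if max (b.y2 - b.y3) 0 ≤ b.x2 - b.x3 then
    chk ⟨b.x1 - 1, b.x2 + 1, b.x3, b.y3, b.y2, b.y1⟩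
  else if b.y2 - b.y3 ≤ 0 ∧ 0 < b.x3 - b.x2 then
    chk ⟨b.x1, b.x2, b.x3 - 1, b.y3 + 1, b.y2, b.y1⟩
  else if max (b.x2 - b.x3) 0 < b.y2 - b.y3 then
    chk ⟨b.x1, b.x2, b.x3, b.y3, b.y2 - 1, b.y1 + 1⟩
  else none

def zz1 (b : C6) : ℤ := b.y1 - b.x1
def zz2 (b : C6) : ℤ := b.y2 - b.y3
def zz3 (b : C6) : ℤ := b.x3 - b.x2
def zz4 (b : C6) : ℤ := (b.y3 - b.x3) / 2

def F1c (b : C6) : Prop :=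
  zz1 b + zz2 b + zz3 b + 3 * zz4 b ≤ 0 ∧ zz1 b + zz2 b + 3 * zz4 b ≤ 0 ∧
    zz1 b + zz2 b ≤ 0 ∧ zz1 b ≤ 0
def F2c (b : C6) : Prop :=
  zz1 b + zz2 b + zz3 b + 3 * zz4 b ≤ 0 ∧ zz2 b + 3 * zz4 b ≤ 0 ∧
    zz2 b ≤ 0 ∧ 0 < zz1 b
def F3c (b : C6) : Prop :=
  zz1 b + zz3 b + 3 * zz4 b ≤ 0 ∧ zz3 b + 3 * zz4 b ≤ 0 ∧ zz4 b ≤ 0 ∧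
    0 < zz2 b ∧ 0 < zz1 b + zz2 b
def F4c (b : C6) : Prop :=
  0 < zz1 b + zz2 b + 3 * zz4 b ∧ 0 < zz2 b + 3 * zz4 b ∧ 0 < zz4 b ∧
    zz3 b ≤ 0 ∧ zz1 b + zz3 b ≤ 0
def F5c (b : C6) : Prop :=
  0 < zz1 b + zz2 b + zz3 b + 3 * zz4 b ∧ 0 < zz3 b + 3 * zz4 b ∧
    0 < zz3 b ∧ zz1 b ≤ 0
def F6c (b : C6) : Prop :=
  0 < zz1 b + zz2 b + zz3 b + 3 * zz4 b ∧ 0 < zz1 b + zz3 b + 3 * zz4 b ∧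
    0 < zz1 b + zz3 b ∧ 0 < zz1 b

def E1c (b : C6) : Prop :=
  zz1 b + zz2 b + zz3 b + 3 * zz4 b < 0 ∧ zz1 b + zz2 b + 3 * zz4 b < 0 ∧
    zz1 b + zz2 b < 0 ∧ zz1 b < 0
def E2c (b : C6) : Prop :=
  zz1 b + zz2 b + zz3 b + 3 * zz4 b < 0 ∧ zz2 b + 3 * zz4 b < 0 ∧
    zz2 b < 0 ∧ 0 ≤ zz1 b
def E3c (b : C6) : Prop :=
  zz1 b + zz3 b + 3 * zz4 b < 0 ∧ zz3 b + 3 * zz4 b < 0 ∧ zz4 b < 0 ∧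
    0 ≤ zz2 b ∧ 0 ≤ zz1 b + zz2 b
def E4c (b : C6) : Prop :=
  0 ≤ zz1 b + zz2 b + 3 * zz4 b ∧ 0 ≤ zz2 b + 3 * zz4 b ∧ 0 ≤ zz4 b ∧
    zz3 b < 0 ∧ zz1 b + zz3 b < 0
def E5c (b : C6) : Prop :=
  0 ≤ zz1 b + zz2 b + zz3 b + 3 * zz4 b ∧ 0 ≤ zz3 b + 3 * zz4 b ∧
    0 ≤ zz3 b ∧ zz1 b < 0
def E6c (b : C6) : Prop :=
  0 ≤ zz1 b + zz2 b + zz3 b + 3 * zz4 b ∧ 0 ≤ zz1 b + zz3 b + 3 * zz4 b ∧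
    0 ≤ zz1 b + zz3 b ∧ 0 ≤ zz1 b

/-- The operator `f̃₀` on `B_{≥0}`, given by the six cases `(F₁)–(F₆)`. -/
def f0op (b : C6) : Option C6 :=
  if F1c b then chk ⟨b.x1 + 1, b.x2, b.x3, b.y3, b.y2, b.y1⟩
  else if F2c b then chk ⟨b.x1, b.x2, b.x3 + 1, b.y3 + 1, b.y2, b.y1 - 1⟩
  else if F3c b then chk ⟨b.x1, b.x2, b.x3 + 2, b.y3, b.y2 - 1, b.y1⟩
  else if F4c b then chk ⟨b.x1, b.x2 + 1, b.x3, b.y3 - 2, b.y2, b.y1⟩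
  else if F5c b then chk ⟨b.x1 + 1, b.x2, b.x3 - 1, b.y3 - 1, b.y2, b.y1⟩
  else if F6c b then chk ⟨b.x1, b.x2, b.x3, b.y3, b.y2, b.y1 - 1⟩
  else none

/-- The operator `ẽ₀` on `B_{≥0}`, given by the six cases `(E₁)–(E₆)`. -/
def e0op (b : C6) : Option C6 :=
  if E1c b then chk ⟨b.x1 - 1, b.x2, b.x3, b.y3, b.y2, b.y1⟩
  else if E2c b then chk ⟨b.x1, b.x2, b.x3 - 1, b.y3 - 1, b.y2, b.y1 + 1⟩
  else if E3c b then chk ⟨b.x1, b.x2, b.x3 - 2, b.y3, b.y2 + 1, b.y1⟩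
  else if E4c b then chk ⟨b.x1, b.x2 - 1, b.x3, b.y3 + 2, b.y2, b.y1⟩
  else if E5c b then chk ⟨b.x1 - 1, b.x2, b.x3 + 1, b.y3 + 1, b.y2, b.y1⟩
  else if E6c b then chk ⟨b.x1, b.x2, b.x3, b.y3, b.y2, b.y1 + 1⟩
  else none

/-- `s(b) = x₁+x₂+(x₃+x̄₃)/2+x̄₂+x̄₁`. -/
def sB (b : C6) : ℤ := b.x1 + b.x2 + (b.x3 + b.y3) / 2 + b.y2 + b.y1

/-- `max A` for `A = (0, z₁, z₁+z₂, z₁+z₂+3z₄, z₁+z₂+z₃+3z₄, 2z₁+z₂+z₃+3z₄)`. -/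
def maxA (b : C6) : ℤ :=
  max 0 (max (zz1 b) (max (zz1 b + zz2 b) (max (zz1 b + zz2 b + 3 * zz4 b)
    (max (zz1 b + zz2 b + zz3 b + 3 * zz4 b)
      (2 * zz1 b + zz2 b + zz3 b + 3 * zz4 b)))))

def phi0 (l : ℤ) (b : C6) : ℤ := l - sB b + maxA b

def eps0 (l : ℤ) (b : C6) : ℤ :=
  l - sB b + maxA b - (2 * zz1 b + zz2 b + zz3 b + 3 * zz4 b)

def phi1 (b : C6) : ℤ := b.x1 + max (b.x3 - b.x2 + max (b.y2 - b.y3) 0) 0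

/-- For `j₀ ≤ j₁`, the element
`b̄ = (0, y₁, -2y₁+3y₀+i, y₀+i, y₀+j₀, 0) ∈ B_l`, with `yₐ = (l-i-jₐ)/3`,
is `(0,1)`-highest weight: `ẽ₀ b̄ = 0` and `ẽ₁ b̄ = 0` in `B_l`, and
`φ₀(b̄) = j₀`, `φ₁(b̄) = j₁`. -/
theorem bbar_highest (l i j0 j1 y0 y1 : ℤ)
    (hi : 0 ≤ i) (hij0 : i ≤ j0) (hj01 : j0 ≤ j1) (hj1 : j1 ≤ l - i)
    (hy0 : 0 ≤ y0) (hy1 : 0 ≤ y1)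
    (hy0e : 3 * y0 = l - i - j0) (hy1e : 3 * y1 = l - i - j1) :
    (memB ⟨0, y1, -2 * y1 + 3 * y0 + i, y0 + i, y0 + j0, 0⟩ ∧
      sB ⟨0, y1, -2 * y1 + 3 * y0 + i, y0 + i, y0 + j0, 0⟩ ≤ l) ∧
    (∀ b', e0op ⟨0, y1, -2 * y1 + 3 * y0 + i, y0 + i, y0 + j0, 0⟩ = some b' →
      ¬ sB b' ≤ l) ∧
    e1op ⟨0, y1, -2 * y1 + 3 * y0 + i, y0 + i, y0 + j0, 0⟩ = none ∧
    phi0 l ⟨0, y1, -2 * y1 + 3 * y0 + i, y0 + i, y0 + j0, 0⟩ = j0 ∧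
    phi1 ⟨0, y1, -2 * y1 + 3 * y0 + i, y0 + i, y0 + j0, 0⟩ = j1 := by
  have key : 3 * (y0 - y1) = j1 - j0 := by omega
  set b : C6 := ⟨0, y1, -2 * y1 + 3 * y0 + i, y0 + i, y0 + j0, 0⟩ with hb
  have hz1 : zz1 b = 0 := by simp only [zz1, hb]; omega
  have hz2 : zz2 b = j0 - i := by simp only [zz2, hb]; omega
  have hz3 : zz3 b = 3 * (y0 - y1) + i := by simp only [zz3, hb]; omega
  have hz4 : zz4 b = y1 - y0 := by
    simp only [zz4, hb]
    omega
  have hsB : sB b = l := by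
    simp only [sB, hb]
    omega
  refine ⟨⟨?_, by omega⟩, ?_, ?_, ?_, ?_⟩
  · simp only [memB, hb]
    omega
  · intro b' hb'
    have hE1 : ¬ E1c b := by simp only [E1c, hz1, hz2, hz3, hz4]; omega
    have hE2 : ¬ E2c b := by simp only [E2c, hz1, hz2, hz3, hz4]; omega
    have hE3 : ¬ E3c b := by simp only [E3c, hz1, hz2, hz3, hz4]; omega
    have hE4 : ¬ E4c b := by simp only [E4c, hz1, hz2, hz3, hz4]; omega
    have hE5 : ¬ E5c b := by simp only [E5c, hz1, hz2, hz3, hz4]; omega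
    have hE6 : E6c b := by simp only [E6c, hz1, hz2, hz3, hz4]; omega
    rw [e0op, if_neg hE1, if_neg hE2, if_neg hE3, if_neg hE4, if_neg hE5,
      if_pos hE6, chk] at hb'
    rw [if_pos (by simp [hb]; omega)] at hb'
    obtain rfl : _ = b' := Option.some_injective _ hb'
    simp only [sB, hb]
    omega
  · have h1 : max (b.x2 - b.x3) 0 ≤ b.y2 - b.y3 := by
      simp only [hb]; omega
    rw [e1op, if_pos h1, chk, if_neg (by simp [hb])]
  · have hmax : maxA b = j0 := by
      simp only [maxA, hz1, hz2, hz3, hz4]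
      omega
    simp only [phi0, hmax, hsB]
    ring
  · simp only [phi1, hb]
    omega


end
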